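/- Let R be a root system in ℝ^d with positive system R₊ and fundamental Weyl chamber 𝕎 = {x : ⟨α,x⟩ > 0 for all α ∈ R₊}. Then for any x ∈ 𝕎, ∑_{α ∈ R₊} |α|² / ⟨α,x⟩² = ∑_{α,β ∈ R₊} ⟨α,β⟩ / (⟨α,x⟩⟨β,x⟩). -/

import Mathlib

open scoped InnerProductSpace BigOperators

open MvPolynomial

noncomputable section AuxRootSum

variable {d : ℕ}

/-- The linear form `x ↦ ∑ δ i * x i` as a multivariate polynomial. -/
noncomputable def linPoly (δ : Fin d → ℝ) : MvPolynomial (Fin d) ℝ :=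
  ∑ i, MvPolynomial.C (δ i) * MvPolynomial.X i

lemma eval_linPoly (δ x : Fin d → ℝ) : eval x (linPoly δ) = ∑ i, δ i * x i := by
  simp [linPoly]

lemma X_dvd_sub_subst (i : Fin d) (Q : MvPolynomial (Fin d) ℝ) :
    (X i : MvPolynomial (Fin d) ℝ) ∣
      Q - aeval (Function.update X i (0 : MvPolynomial (Fin d) ℝ)) Q := by
  induction Q using MvPolynomial.induction_on with
  | C a => simp
  | add p q hp hq =>
      have := dvd_add hp hq
      convert this using 1
      rw [map_add]; ring
  | mul_X p j hp =>
      rw [map_mul, aeval_X]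
      by_cases hj : j = i
      · subst hj
        rw [Function.update_self]
        simpa using Dvd.intro _ rfl
      · rw [Function.update_of_ne hj]
        have : p * X j - aeval (Function.update X i (0 : MvPolynomial (Fin d) ℝ)) p * X j
            = (p - aeval (Function.update X i (0 : MvPolynomial (Fin d) ℝ)) p) * X j := by ring
        rw [this]
        exact hp.mul_right _

lemma eval_aeval' (f : Fin d → MvPolynomial (Fin d) ℝ) (y : Fin d → ℝ)
    (Q : MvPolynomial (Fin d) ℝ) :
    eval y (aeval f Q) = eval (fun j => eval y (f j)) Q := by
  rw [aeval_def, MvPolynomial.algebraMap_eq, ← eval_assoc]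
  rfl

lemma X_dvd_of_vanish (i : Fin d) (Q : MvPolynomial (Fin d) ℝ)
    (h : ∀ y : Fin d → ℝ, y i = 0 → eval y Q = 0) : (X i : MvPolynomial (Fin d) ℝ) ∣ Q := by
  have h2 : aeval (Function.update X i (0 : MvPolynomial (Fin d) ℝ)) Q = 0 := by
    apply MvPolynomial.funext
    intro y
    rw [eval_aeval']
    rw [map_zero]
    have : (fun j => eval y (Function.update X i (0 : MvPolynomial (Fin d) ℝ) j))
        = Function.update y i 0 := by
      funext j
      by_cases hj : j = i
      · subst hj; simp
      · simp [Function.update_of_ne hj]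
    rw [this]
    exact h _ (by simp)
  have := X_dvd_sub_subst i Q
  rwa [h2, sub_zero] at this

end AuxRootSum

noncomputable section LinAuto

variable {d : ℕ}

/-- Substitution sending `X i` to `(δ i)⁻¹ (X i - ∑_{k ≠ i} δ k X k)`. -/
noncomputable def substF (δ : Fin d → ℝ) (i : Fin d) : Fin d → MvPolynomial (Fin d) ℝ :=
  fun j =>
    if j = i then C (δ i)⁻¹ * (X i - ∑ k ∈ Finset.univ.erase i, C (δ k) * X k) else X j

/-- Substitution sending `X i` to `linPoly δ`. -/
noncomputable def substG (δ : Fin d → ℝ) (i : Fin d) : Fin d → MvPolynomial (Fin d) ℝ :=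
  fun j => if j = i then linPoly δ else X j

lemma linPoly_split (δ : Fin d → ℝ) (i : Fin d) :
    linPoly δ = C (δ i) * X i + ∑ k ∈ Finset.univ.erase i, C (δ k) * X k := by
  rw [linPoly, ← Finset.add_sum_erase _ _ (Finset.mem_univ i)]

lemma aeval_substF_linPoly (δ : Fin d → ℝ) (i : Fin d) (hi : δ i ≠ 0) :
    aeval (substF δ i) (linPoly δ) = X i := by
  rw [linPoly_split δ i, map_add, map_mul, aeval_C, aeval_X, MvPolynomial.algebraMap_eq]
  have h1 : (substF δ i) i = C (δ i)⁻¹ * (X i - ∑ k ∈ Finset.univ.erase i, C (δ k) * X k) := by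
    simp [substF]
  have h2 : aeval (substF δ i) (∑ k ∈ Finset.univ.erase i, C (δ k) * X k)
      = ∑ k ∈ Finset.univ.erase i, C (δ k) * X k := by
    rw [map_sum]
    apply Finset.sum_congr rfl
    intro k hk
    rw [map_mul, aeval_C, aeval_X, MvPolynomial.algebraMap_eq, substF,
      if_neg (Finset.ne_of_mem_erase hk)]
  rw [h1, h2, ← mul_assoc, ← C_mul, mul_inv_cancel₀ hi, C_1, one_mul]
  ring

/-- The algebra automorphism of `MvPolynomial (Fin d) ℝ` carrying `linPoly δ` to `X i`. -/
noncomputable def linEquiv (δ : Fin d → ℝ) (i : Fin d) (hi : δ i ≠ 0) :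
    MvPolynomial (Fin d) ℝ ≃ₐ[ℝ] MvPolynomial (Fin d) ℝ :=
  AlgEquiv.ofAlgHom (aeval (substF δ i)) (aeval (substG δ i))
    (by
      apply MvPolynomial.algHom_ext
      intro j
      rw [AlgHom.comp_apply, aeval_X, AlgHom.coe_id, id_eq]
      by_cases hj : j = i
      · subst hj
        rw [substG, if_pos rfl, aeval_substF_linPoly δ j hi]
      · rw [substG, if_neg hj, aeval_X, substF, if_neg hj])
    (by
      apply MvPolynomial.algHom_ext
      intro j
      rw [AlgHom.comp_apply, aeval_X, AlgHom.coe_id, id_eq]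
      by_cases hj : j = i
      · subst hj
        rw [substF, if_pos rfl, map_mul, map_sub, aeval_C, aeval_X,
          MvPolynomial.algebraMap_eq, substG, if_pos rfl]
        have h2 : aeval (substG δ j) (∑ k ∈ Finset.univ.erase j, C (δ k) * X k)
            = ∑ k ∈ Finset.univ.erase j, C (δ k) * X k := by
          rw [map_sum]
          apply Finset.sum_congr rfl
          intro k hk
          rw [map_mul, aeval_C, aeval_X, MvPolynomial.algebraMap_eq, substG,
            if_neg (Finset.ne_of_mem_erase hk)]
        rw [h2, linPoly_split δ j, add_sub_cancel_right, ← mul_assoc, ← C_mul,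
          inv_mul_cancel₀ hi, C_1, one_mul]
      · rw [substF, if_neg hj, aeval_X, substG, if_neg hj])

lemma prime_X_mv {m : ℕ} (i : Fin m) : Prime (X i : MvPolynomial (Fin m) ℝ) := by
  obtain ⟨d, rfl⟩ : ∃ d, m = d + 1 := ⟨m - 1, by have := i.pos; omega⟩
  let e := (renameEquiv ℝ (Equiv.swap i 0)).trans (finSuccEquiv ℝ d)
  rw [← MulEquiv.prime_iff e.toMulEquiv]
  have he : e.toMulEquiv (X i) = Polynomial.X := by
    show e (X i) = Polynomial.X
    rw [AlgEquiv.trans_apply, renameEquiv_apply, rename_X, Equiv.swap_apply_left,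
      finSuccEquiv_X_zero]
  rw [he]
  exact Polynomial.prime_X

lemma prime_linPoly {δ : Fin d → ℝ} (hδ : δ ≠ 0) : Prime (linPoly δ) := by
  obtain ⟨i, hi⟩ : ∃ i, δ i ≠ 0 := Function.ne_iff.mp hδ
  rw [← MulEquiv.prime_iff (linEquiv δ i hi).toMulEquiv]
  have : (linEquiv δ i hi).toMulEquiv (linPoly δ) = X i := by
    show aeval (substF δ i) (linPoly δ) = X i
    exact aeval_substF_linPoly δ i hi
  rw [this]
  exact prime_X_mv i

lemma linPoly_dvd_of_vanish {δ : Fin d → ℝ} (hδ : δ ≠ 0) (Q : MvPolynomial (Fin d) ℝ)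
    (h : ∀ y : Fin d → ℝ, (∑ i, δ i * y i) = 0 → eval y Q = 0) : linPoly δ ∣ Q := by
  obtain ⟨i, hi⟩ : ∃ i, δ i ≠ 0 := Function.ne_iff.mp hδ
  set ψ := linEquiv δ i hi with hψ
  have key : (X i : MvPolynomial (Fin d) ℝ) ∣ ψ Q := by
    apply X_dvd_of_vanish
    intro y hy
    have hev : eval y (ψ Q) = eval (fun j => eval y (substF δ i j)) Q := by
      show eval y (aeval (substF δ i) Q) = _
      exact eval_aeval' _ _ _
    rw [hev]
    apply h
    have hx : ∀ j, eval y (substF δ i j)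
        = if j = i then (δ i)⁻¹ * (y i - ∑ k ∈ Finset.univ.erase i, δ k * y k) else y j := by
      intro j
      by_cases hj : j = i
      · subst hj; simp [substF]
      · simp [substF, hj]
    calc ∑ j, δ j * eval y (substF δ i j)
        = δ i * ((δ i)⁻¹ * (y i - ∑ k ∈ Finset.univ.erase i, δ k * y k))
          + ∑ k ∈ Finset.univ.erase i, δ k * y k := by
          rw [← Finset.add_sum_erase _ _ (Finset.mem_univ i)]
          congr 1
          · rw [hx i, if_pos rfl]
          · apply Finset.sum_congr rfl
            intro k hk
            rw [hx k, if_neg (Finset.ne_of_mem_erase hk)]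
      _ = y i := by
          rw [← mul_assoc, mul_inv_cancel₀ hi, one_mul]; ring
      _ = 0 := hy
  have h1 : linPoly δ = ψ.symm (X i) := by
    rw [← aeval_substF_linPoly δ i hi]
    exact (ψ.symm_apply_apply _).symm
  have h2 : (Q : MvPolynomial (Fin d) ℝ) = ψ.symm (ψ Q) := (ψ.symm_apply_apply _).symm
  rw [h1, h2]
  exact map_dvd ψ.symm key

lemma prod_linPoly_dvd (s : Finset (EuclideanSpace ℝ (Fin d))) (P : MvPolynomial (Fin d) ℝ)
    (hprime : ∀ δ ∈ s, Prime (linPoly δ))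
    (hnd : ∀ δ ∈ s, ∀ γ ∈ s, δ ≠ γ → ¬ linPoly δ ∣ linPoly γ)
    (hdvd : ∀ δ ∈ s, linPoly δ ∣ P) :
    (∏ δ ∈ s, linPoly δ) ∣ P := by
  classical
  induction s using Finset.induction_on generalizing P with
  | empty => simp
  | insert a s ha ih =>
    obtain ⟨Q, rfl⟩ := hdvd a (Finset.mem_insert_self a s)
    rw [Finset.prod_insert ha]
    apply mul_dvd_mul_left
    apply ih
    · intro δ hδ; exact hprime δ (Finset.mem_insert_of_mem hδ)
    · intro δ hδ γ hγ hne
      exact hnd δ (Finset.mem_insert_of_mem hδ) γ (Finset.mem_insert_of_mem hγ) hne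
    · intro δ hδ
      have hp := hprime δ (Finset.mem_insert_of_mem hδ)
      have hd : linPoly δ ∣ linPoly a * Q := hdvd δ (Finset.mem_insert_of_mem hδ)
      rcases (hp.dvd_mul).mp hd with h | h
      · exact absurd h (hnd δ (Finset.mem_insert_of_mem hδ) a (Finset.mem_insert_self a s)
          (by rintro rfl; exact ha hδ))
      · exact h

end LinAuto

noncomputable def reflct {d : ℕ} (δ v : EuclideanSpace ℝ (Fin d)) : EuclideanSpace ℝ (Fin d) :=
  v - (2 * ⟪δ, v⟫_ℝ / ‖δ‖ ^ 2) • δ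

lemma inner_reflct {d : ℕ} (δ γ v : EuclideanSpace ℝ (Fin d)) :
    ⟪γ, reflct δ v⟫_ℝ = ⟪reflct δ γ, v⟫_ℝ := by
  simp only [reflct, inner_sub_left, inner_sub_right, real_inner_smul_left, real_inner_smul_right,
    real_inner_comm γ δ]
  ring

lemma reflct_reflct {d : ℕ} (δ : EuclideanSpace ℝ (Fin d)) (hδ : δ ≠ 0)
    (v : EuclideanSpace ℝ (Fin d)) : reflct δ (reflct δ v) = v := by
  have hn : ‖δ‖ ^ 2 ≠ 0 := pow_ne_zero _ (norm_ne_zero_iff.mpr hδ)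
  simp only [reflct, inner_sub_right, real_inner_smul_right, real_inner_self_eq_norm_sq]
  have h : 2 * (⟪δ, v⟫_ℝ - 2 * ⟪δ, v⟫_ℝ / ‖δ‖ ^ 2 * ‖δ‖ ^ 2) / ‖δ‖ ^ 2
      = -(2 * ⟪δ, v⟫_ℝ / ‖δ‖ ^ 2) := by field_simp; ring
  rw [h, neg_smul, sub_neg_eq_add, sub_add_cancel]

lemma reflct_neg {d : ℕ} (δ v : EuclideanSpace ℝ (Fin d)) : reflct δ (-v) = -reflct δ v := by
  simp only [reflct, inner_neg_right]
  rw [mul_neg, neg_div, neg_smul, sub_neg_eq_add, neg_sub']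
  module

lemma reflct_self {d : ℕ} (δ : EuclideanSpace ℝ (Fin d)) (hδ : δ ≠ 0) : reflct δ δ = -δ := by
  have hn : ‖δ‖ ^ 2 ≠ 0 := pow_ne_zero _ (norm_ne_zero_iff.mpr hδ)
  rw [reflct, real_inner_self_eq_norm_sq, mul_div_assoc, div_self hn, mul_one, two_smul]
  abel

noncomputable section MainAux

open scoped Classical

variable {d : ℕ}

/-- The off-diagonal sum as a function of `y`. -/
noncomputable def Fsum (S : Finset (EuclideanSpace ℝ (Fin d)))
    (y : EuclideanSpace ℝ (Fin d)) : ℝ :=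
  ∑ α ∈ S, ∑ β ∈ S.erase α, ⟪α, β⟫_ℝ * ∏ γ ∈ (S.erase α).erase β, ⟪γ, y⟫_ℝ

/-- The off-diagonal sum as a polynomial. -/
noncomputable def Psum (S : Finset (EuclideanSpace ℝ (Fin d))) : MvPolynomial (Fin d) ℝ :=
  ∑ α ∈ S, ∑ β ∈ S.erase α,
    MvPolynomial.C (⟪α, β⟫_ℝ) * ∏ γ ∈ (S.erase α).erase β, linPoly γ

lemma inner_eq_sum (γ y : EuclideanSpace ℝ (Fin d)) : ⟪γ, y⟫_ℝ = ∑ i, γ i * y i := by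
  simp [PiLp.inner_apply, RCLike.inner_apply, starRingEnd_apply, star_trivial]
  exact Finset.sum_congr rfl fun _ _ => mul_comm _ _

lemma eval_Psum (S : Finset (EuclideanSpace ℝ (Fin d))) (y : EuclideanSpace ℝ (Fin d)) :
    eval y (Psum S) = Fsum S y := by
  unfold Psum Fsum
  rw [map_sum]
  apply Finset.sum_congr rfl; intro α hα
  rw [map_sum]
  apply Finset.sum_congr rfl; intro β hβ
  rw [map_mul, eval_C, map_prod]
  congr 1
  apply Finset.prod_congr rfl; intro γ hγ
  rw [eval_linPoly]
  exact (inner_eq_sum γ y).symm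

lemma Fsum_reflct
    (R Rpos : Finset (EuclideanSpace ℝ (Fin d)))
    (hR0 : ∀ α ∈ R, α ≠ 0)
    (hR1 : ∀ α ∈ R, ∀ c : ℝ, c • α ∈ R → c • α = α ∨ c • α = -α)
    (hR2 : ∀ α ∈ R, ∀ β ∈ R, β - (2 * ⟪α, β⟫_ℝ / ‖α‖ ^ 2) • α ∈ R)
    (hsub : ∀ α ∈ Rpos, α ∈ R)
    (hdisj : ∀ α ∈ Rpos, -α ∉ Rpos)
    (hunion : ∀ α ∈ R, α ∈ Rpos ∨ -α ∈ Rpos)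
    {δ : EuclideanSpace ℝ (Fin d)} (hδ : δ ∈ Rpos) (y : EuclideanSpace ℝ (Fin d)) :
    Fsum Rpos (reflct δ y) = - Fsum Rpos y := by
  classical
  have hδR : δ ∈ R := hsub δ hδ
  have hδ0 : δ ≠ 0 := hR0 δ hδR
  have hrefl_mem : ∀ γ ∈ R, reflct δ γ ∈ R := fun γ hγ => hR2 δ hδR γ hγ
  set τ : EuclideanSpace ℝ (Fin d) → EuclideanSpace ℝ (Fin d) :=
    fun γ => if reflct δ γ ∈ Rpos then reflct δ γ else -reflct δ γ with hτdef
  set ε : EuclideanSpace ℝ (Fin d) → ℝ :=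
    fun γ => if reflct δ γ ∈ Rpos then 1 else -1 with hεdef
  have hτmem : ∀ γ ∈ Rpos, τ γ ∈ Rpos := by
    intro γ hγ
    by_cases h : reflct δ γ ∈ Rpos
    · simpa [hτdef, h] using h
    · rcases hunion (reflct δ γ) (hrefl_mem γ (hsub γ hγ)) with h' | h'
      · exact absurd h' h
      · simpa [hτdef, h] using h'
  have hsmul : ∀ γ, reflct δ γ = ε γ • τ γ := by
    intro γ
    by_cases h : reflct δ γ ∈ Rpos <;> simp [hτdef, hεdef, h]
  have hε2 : ∀ γ, ε γ * ε γ = 1 := by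
    intro γ; by_cases h : reflct δ γ ∈ Rpos <;> simp [hεdef, h]
  have hττ : ∀ γ ∈ Rpos, τ (τ γ) = γ := by
    intro γ hγ
    by_cases h : reflct δ γ ∈ Rpos
    · have h1 : τ γ = reflct δ γ := by simp [hτdef, h]
      have h2 : reflct δ (τ γ) = γ := by rw [h1, reflct_reflct δ hδ0]
      show (if reflct δ (τ γ) ∈ Rpos then reflct δ (τ γ) else -reflct δ (τ γ)) = γ
      simp [h2, hγ]
    · have h1 : τ γ = -reflct δ γ := by simp [hτdef, h]
      have h2 : reflct δ (τ γ) = -γ := by rw [h1, reflct_neg, reflct_reflct δ hδ0]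
      show (if reflct δ (τ γ) ∈ Rpos then reflct δ (τ γ) else -reflct δ (τ γ)) = γ
      simp [h2, hdisj γ hγ]
  have hτε : ∀ γ ∈ Rpos, ε (τ γ) = ε γ := by
    intro γ hγ
    by_cases h : reflct δ γ ∈ Rpos
    · have h2 : reflct δ (τ γ) = γ := by
        rw [show τ γ = reflct δ γ by simp [hτdef, h], reflct_reflct δ hδ0]
      simp [hεdef, h2, hγ, h]
    · have h2 : reflct δ (τ γ) = -γ := by
        rw [show τ γ = -reflct δ γ by simp [hτdef, h], reflct_neg, reflct_reflct δ hδ0]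
      simp [hεdef, h2, hdisj γ hγ, h]
  have hinner : ∀ γ v, ⟪γ, reflct δ v⟫_ℝ = ε γ * ⟪τ γ, v⟫_ℝ := by
    intro γ v
    rw [inner_reflct, hsmul γ, real_inner_smul_left]
  have hinner2 : ∀ α β, ⟪α, β⟫_ℝ = ε α * ε β * ⟪τ α, τ β⟫_ℝ := by
    intro α β
    have h0 : ⟪α, β⟫_ℝ = ⟪reflct δ α, reflct δ β⟫_ℝ := by
      rw [inner_reflct, reflct_reflct δ hδ0]
    rw [h0, hsmul α, hsmul β, real_inner_smul_left, real_inner_smul_right]; ring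
  have hεδ : ε δ = -1 := by
    simp [hεdef, reflct_self δ hδ0, hdisj δ hδ]
  have hτinj : ∀ a ∈ Rpos, ∀ b ∈ Rpos, τ a = τ b → a = b := by
    intro a ha b hb hab
    rw [← hττ a ha, hab, hττ b hb]
  have hprodsign : ∏ γ ∈ Rpos, ε γ = -1 := by
    rw [← Finset.mul_prod_erase _ _ hδ, hεδ]
    have h1 : ∏ γ ∈ Rpos.erase δ, ε γ = 1 := by
      apply Finset.prod_involution (fun γ _ => τ γ)
      · intro γ hγ
        rw [hτε γ (Finset.mem_of_mem_erase hγ)]; exact hε2 γ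
      · intro γ hγ hne heq
        have hγp := Finset.mem_of_mem_erase hγ
        have hns : reflct δ γ ∉ Rpos := by
          intro hmem; exact hne (by simp [hεdef, hmem])
        have h1 : τ γ = -reflct δ γ := by simp [hτdef, hns]
        rw [h1] at heq
        -- heq : -reflct δ γ = γ
        have h2 : (2:ℝ) • γ = (2 * ⟪δ, γ⟫_ℝ / ‖δ‖ ^ 2) • δ := by
          have h3 : γ - (2 * ⟪δ, γ⟫_ℝ / ‖δ‖ ^ 2) • δ = -γ := by
            have h := neg_eq_iff_eq_neg.mp heq
            simpa only [reflct] using h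
          rw [two_smul]
          have h4 := sub_eq_iff_eq_add.mp h3
          nth_rewrite 1 [h4]
          abel
        have h5 : γ = (⟪δ, γ⟫_ℝ / ‖δ‖ ^ 2) • δ := by
          have := congrArg (fun v : EuclideanSpace ℝ (Fin d) => ((2:ℝ)⁻¹) • v) h2
          simpa [smul_smul, ← mul_div_assoc] using this
        have h6 : (⟪δ, γ⟫_ℝ / ‖δ‖ ^ 2) • δ ∈ R := by rw [← h5]; exact hsub γ hγp
        rcases hR1 δ hδR _ h6 with h7 | h7
        · exact (Finset.ne_of_mem_erase hγ) (by rw [h5, h7])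
        · have h8 : γ = -δ := by rw [h5, h7]
          exact hdisj γ hγp (by rw [h8, neg_neg]; exact hδ)
      · intro γ hγ
        refine Finset.mem_erase.mpr ⟨?_, hτmem γ (Finset.mem_of_mem_erase hγ)⟩
        intro heq
        have := hττ γ (Finset.mem_of_mem_erase hγ)
        rw [heq] at this
        have hτδ : τ δ = δ := by simp [hτdef, reflct_self δ hδ0, hdisj δ hδ]
        rw [hτδ] at this
        exact (Finset.ne_of_mem_erase hγ) this.symm
      · intro γ hγ
        exact hττ γ (Finset.mem_of_mem_erase hγ)
    rw [h1]; ring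
  have key : ∀ α ∈ Rpos, ∀ β ∈ Rpos.erase α,
      ⟪α, β⟫_ℝ * ∏ γ ∈ (Rpos.erase α).erase β, ⟪γ, reflct δ y⟫_ℝ
      = -(⟪τ α, τ β⟫_ℝ * ∏ γ ∈ (Rpos.erase (τ α)).erase (τ β), ⟪γ, y⟫_ℝ) := by
    intro α hα β hβ
    have hβp : β ∈ Rpos := Finset.mem_of_mem_erase hβ
    have hβα : β ≠ α := Finset.ne_of_mem_erase hβ
    have h1 : ∏ γ ∈ (Rpos.erase α).erase β, ⟪γ, reflct δ y⟫_ℝ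
        = (∏ γ ∈ (Rpos.erase α).erase β, ε γ)
          * ∏ γ ∈ (Rpos.erase α).erase β, ⟪τ γ, y⟫_ℝ := by
      rw [← Finset.prod_mul_distrib]
      exact Finset.prod_congr rfl fun γ _ => hinner γ y
    have h2 : ε α * (ε β * ∏ γ ∈ (Rpos.erase α).erase β, ε γ) = -1 := by
      rw [Finset.mul_prod_erase _ _ hβ, Finset.mul_prod_erase _ _ hα]
      exact hprodsign
    have hp : ∏ γ ∈ (Rpos.erase α).erase β, ε γ = -(ε α * ε β) := by
      have ha := hε2 α
      have hb := hε2 β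
      linear_combination (ε α * ε β) * h2
        - ((∏ γ ∈ (Rpos.erase α).erase β, ε γ) * ε β * ε β) * ha
        - (∏ γ ∈ (Rpos.erase α).erase β, ε γ) * hb
    have h3 : ∏ γ ∈ (Rpos.erase α).erase β, ⟪τ γ, y⟫_ℝ
        = ∏ γ ∈ (Rpos.erase (τ α)).erase (τ β), ⟪γ, y⟫_ℝ := by
      apply Finset.prod_nbij' τ τ
      · intro a haa
        have h4 := Finset.mem_of_mem_erase (Finset.mem_of_mem_erase haa)
        refine Finset.mem_erase.mpr ⟨?_, Finset.mem_erase.mpr ⟨?_, hτmem a h4⟩⟩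
        · intro hh; exact (Finset.ne_of_mem_erase haa) (hτinj a h4 β hβp hh)
        · intro hh
          exact (Finset.ne_of_mem_erase (Finset.mem_of_mem_erase haa)) (hτinj a h4 α hα hh)
      · intro a haa
        have h4 := Finset.mem_of_mem_erase (Finset.mem_of_mem_erase haa)
        refine Finset.mem_erase.mpr ⟨?_, Finset.mem_erase.mpr ⟨?_, hτmem a h4⟩⟩
        · intro hh
          apply Finset.ne_of_mem_erase haa
          rw [← hττ a h4, hh]
        · intro hh
          apply Finset.ne_of_mem_erase (Finset.mem_of_mem_erase haa)
          rw [← hττ a h4, hh]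
      · intro a haa
        exact hττ a (Finset.mem_of_mem_erase (Finset.mem_of_mem_erase haa))
      · intro a haa
        exact hττ a (Finset.mem_of_mem_erase (Finset.mem_of_mem_erase haa))
      · intro a _; rfl
    rw [h1, hp, h3, hinner2 α β]
    have ha := hε2 α
    have hb := hε2 β
    set I := ⟪τ α, τ β⟫_ℝ
    set Pr := ∏ γ ∈ (Rpos.erase (τ α)).erase (τ β), ⟪γ, y⟫_ℝ
    linear_combination (-(I * Pr) * ε β * ε β) * ha - I * Pr * hb
  unfold Fsum
  calc ∑ α ∈ Rpos, ∑ β ∈ Rpos.erase α,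
        ⟪α, β⟫_ℝ * ∏ γ ∈ (Rpos.erase α).erase β, ⟪γ, reflct δ y⟫_ℝ
      = ∑ α ∈ Rpos, ∑ β ∈ Rpos.erase α,
        -(⟪τ α, τ β⟫_ℝ * ∏ γ ∈ (Rpos.erase (τ α)).erase (τ β), ⟪γ, y⟫_ℝ) :=
        Finset.sum_congr rfl fun α hα => Finset.sum_congr rfl fun β hβ => key α hα β hβ
    _ = -∑ α ∈ Rpos, ∑ β ∈ Rpos.erase α,
        ⟪τ α, τ β⟫_ℝ * ∏ γ ∈ (Rpos.erase (τ α)).erase (τ β), ⟪γ, y⟫_ℝ := by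
        simp only [Finset.sum_neg_distrib]
    _ = -∑ α ∈ Rpos, ∑ β ∈ Rpos.erase α,
        ⟪α, β⟫_ℝ * ∏ γ ∈ (Rpos.erase α).erase β, ⟪γ, y⟫_ℝ := by
        congr 1
        have inner_eq : ∀ α ∈ Rpos,
            (∑ β ∈ Rpos.erase α,
              ⟪τ α, τ β⟫_ℝ * ∏ γ ∈ (Rpos.erase (τ α)).erase (τ β), ⟪γ, y⟫_ℝ)
            = ∑ β ∈ Rpos.erase (τ α),
              ⟪τ α, β⟫_ℝ * ∏ γ ∈ (Rpos.erase (τ α)).erase β, ⟪γ, y⟫_ℝ := by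
          intro α hα
          apply Finset.sum_nbij' τ τ
          · intro a haa
            have h4 := Finset.mem_of_mem_erase haa
            refine Finset.mem_erase.mpr ⟨?_, hτmem a h4⟩
            intro hh; exact (Finset.ne_of_mem_erase haa) (hτinj a h4 α hα hh)
          · intro a haa
            have h4 := Finset.mem_of_mem_erase haa
            refine Finset.mem_erase.mpr ⟨?_, hτmem a h4⟩
            intro hh
            apply Finset.ne_of_mem_erase haa
            rw [← hττ a h4, hh]
          · intro a haa; exact hττ a (Finset.mem_of_mem_erase haa)
          · intro a haa; exact hττ a (Finset.mem_of_mem_erase haa)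
          · intro a _; rfl
        rw [Finset.sum_congr rfl inner_eq]
        apply Finset.sum_nbij' τ τ
        · intro a ha; exact hτmem a ha
        · intro a ha; exact hτmem a ha
        · intro a ha; exact hττ a ha
        · intro a ha; exact hττ a ha
        · intro a _; rfl

end MainAux

open MvPolynomial in
/-- For a root system `R` with positive system `R₊` and `x` in the
fundamental Weyl chamber,
`∑_{α ∈ R₊} |α|² / ⟨α,x⟩² = ∑_{α,β ∈ R₊} ⟨α,β⟩ / (⟨α,x⟩⟨β,x⟩)`. -/
theorem sum_norm_sq_div_eq_double_sum {d : ℕ}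
    (R Rpos : Finset (EuclideanSpace ℝ (Fin d)))
    (hR0 : ∀ α ∈ R, α ≠ 0)
    (hR1 : ∀ α ∈ R, ∀ c : ℝ, c • α ∈ R → c • α = α ∨ c • α = -α)
    (hR2 : ∀ α ∈ R, ∀ β ∈ R, β - (2 * ⟪α, β⟫_ℝ / ‖α‖ ^ 2) • α ∈ R)
    (hsub : ∀ α ∈ Rpos, α ∈ R)
    (hdisj : ∀ α ∈ Rpos, -α ∉ Rpos)
    (hunion : ∀ α ∈ R, α ∈ Rpos ∨ -α ∈ Rpos)
    (hsep : ∃ β : EuclideanSpace ℝ (Fin d), β ∉ R ∧ ∀ α ∈ Rpos, 0 < ⟪β, α⟫_ℝ)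
    (x : EuclideanSpace ℝ (Fin d))
    (hx : ∀ α ∈ Rpos, 0 < ⟪α, x⟫_ℝ) :
    ∑ α ∈ Rpos, ‖α‖ ^ 2 / ⟪α, x⟫_ℝ ^ 2
      = ∑ α ∈ Rpos, ∑ β ∈ Rpos, ⟪α, β⟫_ℝ / (⟪α, x⟫_ℝ * ⟪β, x⟫_ℝ) := by
  classical
  -- Reduce to the vanishing of the off-diagonal part.
  suffices hoff : ∑ α ∈ Rpos, ∑ β ∈ Rpos.erase α,
      ⟪α, β⟫_ℝ / (⟪α, x⟫_ℝ * ⟪β, x⟫_ℝ) = 0 by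
    have hsplit : ∀ α ∈ Rpos,
        ∑ β ∈ Rpos, ⟪α, β⟫_ℝ / (⟪α, x⟫_ℝ * ⟪β, x⟫_ℝ)
          = ‖α‖ ^ 2 / ⟪α, x⟫_ℝ ^ 2
            + ∑ β ∈ Rpos.erase α, ⟪α, β⟫_ℝ / (⟪α, x⟫_ℝ * ⟪β, x⟫_ℝ) := by
      intro α hα
      rw [← Finset.add_sum_erase _ _ hα]
      congr 1
      rw [real_inner_self_eq_norm_sq, pow_two, pow_two]
    rw [Finset.sum_congr rfl hsplit, Finset.sum_add_distrib, hoff, add_zero]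
  by_cases hsmall : Rpos.card ≤ 1
  · apply Finset.sum_eq_zero; intro α hα
    have h0 : Rpos.erase α = ∅ := by
      apply Finset.card_eq_zero.mp
      have := Finset.card_erase_of_mem hα
      omega
    rw [h0, Finset.sum_empty]
  push_neg at hsmall
  have hπpos : 0 < ∏ γ ∈ Rpos, ⟪γ, x⟫_ℝ := Finset.prod_pos hx
  have hπne : (∏ γ ∈ Rpos, ⟪γ, x⟫_ℝ) ≠ 0 := ne_of_gt hπpos
  -- The polynomial `Psum Rpos` vanishes on every root hyperplane.
  have hvan : ∀ δ ∈ Rpos, ∀ y : EuclideanSpace ℝ (Fin d),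
      ⟪δ, y⟫_ℝ = 0 → Fsum Rpos y = 0 := by
    intro δ hδ y hy
    have h1 : reflct δ y = y := by
      rw [reflct, hy]
      simp
    have h2 := Fsum_reflct R Rpos hR0 hR1 hR2 hsub hdisj hunion hδ y
    rw [h1] at h2
    linarith
  -- Each linear form divides `Psum Rpos`.
  have hdvd : ∀ δ ∈ Rpos, linPoly δ ∣ Psum Rpos := by
    intro δ hδ
    apply linPoly_dvd_of_vanish ((WithLp.ofLp_eq_zero 2).not.mpr (hR0 δ (hsub δ hδ)))
    intro y hy
    have h1 : eval y (Psum Rpos) = Fsum Rpos (WithLp.toLp 2 y) := eval_Psum Rpos (WithLp.toLp 2 y)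
    rw [h1]
    exact hvan δ hδ (WithLp.toLp 2 y) (by rw [inner_eq_sum]; exact hy)
  -- Distinct positive roots give non-associate linear forms.
  have hnd : ∀ δ ∈ Rpos, ∀ γ ∈ Rpos, δ ≠ γ → ¬ linPoly δ ∣ linPoly γ := by
    intro δ hδ γ hγ hne hdvd'
    obtain ⟨Q, hQ⟩ := hdvd'
    have hδ0 : δ ≠ 0 := hR0 δ (hsub δ hδ)
    have hn : ‖δ‖ ^ 2 ≠ 0 := pow_ne_zero _ (norm_ne_zero_iff.mpr hδ0)
    have himp : ∀ y : EuclideanSpace ℝ (Fin d), ⟪δ, y⟫_ℝ = 0 → ⟪γ, y⟫_ℝ = 0 := by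
      intro y hy
      have h1 : eval y (linPoly γ) = eval y (linPoly δ) * eval y Q := by
        rw [hQ, map_mul]
      rw [eval_linPoly, ← inner_eq_sum] at h1
      rw [eval_linPoly, ← inner_eq_sum, hy, zero_mul] at h1
      exact h1
    set c : ℝ := ⟪δ, γ⟫_ℝ / ‖δ‖ ^ 2 with hc
    set y : EuclideanSpace ℝ (Fin d) := γ - c • δ with hy
    have hδy : ⟪δ, y⟫_ℝ = 0 := by
      rw [hy, inner_sub_right, real_inner_smul_right, hc, real_inner_self_eq_norm_sq]
      field_simp
      ring
    have hγy : ⟪γ, y⟫_ℝ = 0 := himp y hδy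
    have hyy : ⟪y, y⟫_ℝ = 0 := by
      rw [hy, inner_sub_left, real_inner_smul_left]
      rw [hy] at hγy hδy
      rw [hγy, hδy]
      ring
    have hy0 : y = 0 := by
      have := inner_self_eq_zero (𝕜 := ℝ).mp hyy
      exact this
    have hγc : γ = c • δ := by
      have h2 : γ - c • δ = 0 := by rw [← hy, hy0]
      exact sub_eq_zero.mp h2
    have h6 : c • δ ∈ R := by rw [← hγc]; exact hsub γ hγ
    rcases hR1 δ (hsub δ hδ) c h6 with h7 | h7
    · exact hne ((hγc.trans h7).symm)
    · have h8 : γ = -δ := by rw [hγc, h7]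
      have : -γ ∈ Rpos := by rw [h8, neg_neg]; exact hδ
      exact hdisj γ hγ this
  -- Product of all linear forms divides `Psum Rpos`.
  have hprodvd : (∏ γ ∈ Rpos, linPoly γ) ∣ Psum Rpos :=
    prod_linPoly_dvd Rpos _ (fun δ hδ => prime_linPoly ((WithLp.ofLp_eq_zero 2).not.mpr (hR0 δ (hsub δ hδ)))) hnd hdvd
  obtain ⟨Q, hPQ⟩ := hprodvd
  set n := Rpos.card with hn
  have hcard2 : ∀ α ∈ Rpos, ∀ β ∈ Rpos.erase α, ((Rpos.erase α).erase β).card = n - 2 := by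
    intro α hα β hβ
    rw [Finset.card_erase_of_mem hβ, Finset.card_erase_of_mem hα]
    omega
  have hFhom : ∀ t : ℝ, Fsum Rpos (t • x) = t ^ (n - 2) * Fsum Rpos x := by
    intro t
    unfold Fsum
    rw [Finset.mul_sum]
    apply Finset.sum_congr rfl; intro α hα
    rw [Finset.mul_sum]
    apply Finset.sum_congr rfl; intro β hβ
    have h1 : ∏ γ ∈ (Rpos.erase α).erase β, ⟪γ, t • x⟫_ℝ
        = t ^ (n - 2) * ∏ γ ∈ (Rpos.erase α).erase β, ⟪γ, x⟫_ℝ := by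
      calc ∏ γ ∈ (Rpos.erase α).erase β, ⟪γ, t • x⟫_ℝ
          = ∏ γ ∈ (Rpos.erase α).erase β, (t * ⟪γ, x⟫_ℝ) :=
            Finset.prod_congr rfl fun γ _ => real_inner_smul_right γ x t
        _ = t ^ (n - 2) * ∏ γ ∈ (Rpos.erase α).erase β, ⟪γ, x⟫_ℝ := by
            rw [Finset.prod_mul_distrib, Finset.prod_const, hcard2 α hα β hβ]
    rw [h1]; ring
  have hπhom : ∀ t : ℝ, (∏ γ ∈ Rpos, ⟪γ, t • x⟫_ℝ) = t ^ n * ∏ γ ∈ Rpos, ⟪γ, x⟫_ℝ := by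
    intro t
    calc ∏ γ ∈ Rpos, ⟪γ, t • x⟫_ℝ = ∏ γ ∈ Rpos, (t * ⟪γ, x⟫_ℝ) :=
          Finset.prod_congr rfl fun γ _ => real_inner_smul_right γ x t
      _ = t ^ n * ∏ γ ∈ Rpos, ⟪γ, x⟫_ℝ := by
          rw [Finset.prod_mul_distrib, Finset.prod_const, hn]
  have hkey : ∀ t : ℝ, t ≠ 0 →
      eval (fun i => t * x i) Q * t ^ 2
        = Fsum Rpos x / (∏ γ ∈ Rpos, ⟪γ, x⟫_ℝ) := by
    intro t ht
    have e1 : eval ((t • x : EuclideanSpace ℝ (Fin d))) (Psum Rpos) = Fsum Rpos (t • x) :=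
      eval_Psum Rpos _
    rw [hPQ, map_mul, map_prod] at e1
    have e2 : ∀ γ ∈ Rpos, eval ((t • x : EuclideanSpace ℝ (Fin d))) (linPoly γ) = ⟪γ, t • x⟫_ℝ := by
      intro γ _
      rw [eval_linPoly, ← inner_eq_sum]
    rw [Finset.prod_congr rfl e2, hπhom, hFhom] at e1
    have e3 : eval ((t • x : EuclideanSpace ℝ (Fin d))) Q = eval (fun i => t * x i) Q := rfl
    rw [e3] at e1
    have e4 : t ^ n = t ^ (n - 2) * t ^ 2 := by
      rw [← pow_add]
      congr 1
      omega
    rw [e4] at e1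
    have e5 : t ^ (n - 2) * (t ^ 2 * ((∏ γ ∈ Rpos, ⟪γ, x⟫_ℝ) * eval (fun i => t * x i) Q))
        = t ^ (n - 2) * Fsum Rpos x := by
      rw [← e1]; ring
    have e6 := mul_left_cancel₀ (pow_ne_zero (n - 2) ht) e5
    rw [eq_div_iff hπne]
    linear_combination e6
  -- Take the limit `t → 0` to conclude `Fsum Rpos x = 0`.
  have hcont : Continuous (fun t : ℝ => eval (fun i => t * x i) Q) :=
    (MvPolynomial.continuous_eval Q).comp (by fun_prop)
  have hlim1 : Filter.Tendsto (fun t : ℝ => eval (fun i => t * x i) Q * t ^ 2)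
      (nhdsWithin 0 {0}ᶜ) (nhds 0) := by
    have h1 : Filter.Tendsto (fun t : ℝ => eval (fun i => t * x i) Q * t ^ 2)
        (nhds 0) (nhds (eval (fun i => (0:ℝ) * x i) Q * 0 ^ 2)) :=
      (hcont.mul (continuous_pow 2)).tendsto 0
    simpa using h1.mono_left nhdsWithin_le_nhds
  have hlim2 : Filter.Tendsto (fun t : ℝ => eval (fun i => t * x i) Q * t ^ 2)
      (nhdsWithin 0 {0}ᶜ) (nhds (Fsum Rpos x / ∏ γ ∈ Rpos, ⟪γ, x⟫_ℝ)) := by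
    apply Filter.Tendsto.congr' _ tendsto_const_nhds
    filter_upwards [self_mem_nhdsWithin] with t ht
    exact (hkey t ht).symm
  have h0 : Fsum Rpos x / (∏ γ ∈ Rpos, ⟪γ, x⟫_ℝ) = 0 := tendsto_nhds_unique hlim2 hlim1
  have hF0 : Fsum Rpos x = 0 := by
    rcases div_eq_zero_iff.mp h0 with h | h
    · exact h
    · exact absurd h hπne
  -- Finally, relate the off-diagonal sum to `Fsum Rpos x`.
  have hfinal : (∑ α ∈ Rpos, ∑ β ∈ Rpos.erase α, ⟪α, β⟫_ℝ / (⟪α, x⟫_ℝ * ⟪β, x⟫_ℝ))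
      * (∏ γ ∈ Rpos, ⟪γ, x⟫_ℝ) = Fsum Rpos x := by
    unfold Fsum
    rw [Finset.sum_mul]
    apply Finset.sum_congr rfl; intro α hα
    rw [Finset.sum_mul]
    apply Finset.sum_congr rfl; intro β hβ
    have hπsplit : (∏ γ ∈ Rpos, ⟪γ, x⟫_ℝ)
        = ⟪α, x⟫_ℝ * (⟪β, x⟫_ℝ * ∏ γ ∈ (Rpos.erase α).erase β, ⟪γ, x⟫_ℝ) := by
      rw [Finset.mul_prod_erase (Rpos.erase α) (fun γ => ⟪γ, x⟫_ℝ) hβ,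
        Finset.mul_prod_erase Rpos (fun γ => ⟪γ, x⟫_ℝ) hα]
    have ha := ne_of_gt (hx α hα)
    have hb := ne_of_gt (hx β (Finset.mem_of_mem_erase hβ))
    have hab : ⟪α, x⟫_ℝ * ⟪β, x⟫_ℝ ≠ 0 := mul_ne_zero ha hb
    rw [hπsplit, div_mul_eq_mul_div,
      show ⟪α, β⟫_ℝ * (⟪α, x⟫_ℝ * (⟪β, x⟫_ℝ * ∏ γ ∈ (Rpos.erase α).erase β, ⟪γ, x⟫_ℝ))
        = (⟪α, β⟫_ℝ * ∏ γ ∈ (Rpos.erase α).erase β, ⟪γ, x⟫_ℝ) * (⟪α, x⟫_ℝ * ⟪β, x⟫_ℝ)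
        from by ring,
      mul_div_assoc, div_self hab, mul_one]
  have hzero : (∑ α ∈ Rpos, ∑ β ∈ Rpos.erase α, ⟪α, β⟫_ℝ / (⟪α, x⟫_ℝ * ⟪β, x⟫_ℝ))
      * (∏ γ ∈ Rpos, ⟪γ, x⟫_ℝ) = 0 := hfinal.trans hF0
  rcases mul_eq_zero.mp hzero with h | h
  · exact h
  · exact absurd h hπne
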